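/- arXiv:0911.1726 — 3 statements merged into one kernel-verified Lean document; each statement's English description precedes it below -/
import Mathlib

section
/- Assume V : ℝ → [0,∞) satisfies (H^V). Then c̄ = c⋆⋆, where c⋆⋆ := inf{ (3·7^{1/3}/4) · ( ∫_ℝ∫_ℝ |g'(x)−g'(y)|²/|x−y|² dx dy )^{1/3} · ( ∫_ℝ V(g(x)) dx )^{2/3} : g ∈ H^{3/2}_loc(ℝ), g(−t) = α and g(t) = β for all t ≥ 1 }. -/
open MeasureTheory Set Filter Topology ENNReal

noncomputable section

/-- Squared Gagliardo `H^{1/2}` seminorm of `g` over the set `s ⊆ ℝ`. -/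
def halfSemi (g : ℝ → ℝ) (s : Set ℝ) : ℝ≥0∞ :=
  ∫⁻ p in s ×ˢ s, ENNReal.ofReal ((g p.1 - g p.2) ^ 2 / (p.1 - p.2) ^ 2)

/-- `f ∈ H²_loc(ℝ)`, encoded through a concrete derivative `f'` and a second
derivative `f''` which is the (locally integrable) a.e. derivative of `f'`. -/
def IsH2Profile (f f' f'' : ℝ → ℝ) : Prop :=
  (∀ t : ℝ, HasDerivAt f (f' t) t) ∧
  (∀ s t : ℝ, IntervalIntegrable f'' volume s t) ∧
  (∀ s t : ℝ, f' t - f' s = ∫ x in s..t, f'' x)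

/-- `f ∈ H²_loc` on the set `s`. -/
def IsH2ProfileOn (s : Set ℝ) (f f' f'' : ℝ → ℝ) : Prop :=
  (∀ t ∈ s, HasDerivAt f (f' t) t) ∧
  (∀ r ∈ s, ∀ t ∈ s, IntervalIntegrable f'' volume r t ∧ f' t - f' r = ∫ x in r..t, f'' x)

/-- `f` locally absolutely continuous with derivative `f'` (the `H^{3/2}_loc` model:
`f'` is the a.e. derivative of `f`). -/
def IsACProfile (f f' : ℝ → ℝ) : Prop :=
  (∀ s t : ℝ, IntervalIntegrable f' volume s t) ∧
  (∀ s t : ℝ, f t - f s = ∫ x in s..t, f' x)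

/-- The optimal interior transition energy `m`. -/
def mConst (W : ℝ → ℝ) (a b : ℝ) : ℝ :=
  sInf {e : ℝ | ∃ (f f' f'' : ℝ → ℝ) (R : ℝ), 0 < R ∧ IsH2Profile f f' f'' ∧
    (∀ t : ℝ, R ≤ t → f (-t) = a ∧ f t = b) ∧
    (∫⁻ t in Ioo (-R) R, ENNReal.ofReal (W (f t) + f'' t ^ 2)) ≠ ⊤ ∧
    e = (∫⁻ t in Ioo (-R) R, ENNReal.ofReal (W (f t) + f'' t ^ 2)).toReal}

/-- The optimal boundary/interior interaction energy `σ(z, ξ)`. -/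
def sigmaConst (W : ℝ → ℝ) (z ξ : ℝ) : ℝ :=
  sInf {e : ℝ | ∃ (f f' f'' : ℝ → ℝ) (R : ℝ), 0 < R ∧
    IsH2ProfileOn (Ioi 0) f f' f'' ∧
    ContinuousWithinAt f (Ici 0) 0 ∧ f 0 = ξ ∧
    (∀ t : ℝ, R ≤ t → f t = z) ∧
    (∫⁻ t in Ioo 0 R, ENNReal.ofReal (W (f t) + f'' t ^ 2)) ≠ ⊤ ∧
    e = (∫⁻ t in Ioo 0 R, ENNReal.ofReal (W (f t) + f'' t ^ 2)).toReal}

/-- Admissible class for the lower boundary-transition constant `c̲`. -/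
def cLowSet (V : ℝ → ℝ) (α β : ℝ) : Set ℝ :=
  {e : ℝ | ∃ (f f' : ℝ → ℝ) (R : ℝ), 0 < R ∧ IsACProfile f f' ∧
    halfSemi f' univ ≠ ⊤ ∧
    (∀ t : ℝ, R ≤ t → f (-t) = α ∧ f t = β) ∧
    e = (1 / 8) * (halfSemi f' (Ioo (-R) R)).toReal + ∫ x in Ioo (-R) R, V (f x)}

/-- The lower boundary-transition constant `c̲`. -/
def cLow (V : ℝ → ℝ) (α β : ℝ) : ℝ := sInf (cLowSet V α β)

/-- Admissible class for the upper boundary-transition constant `c̄`. -/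
def cUpSet (V : ℝ → ℝ) (α β : ℝ) : Set ℝ :=
  {e : ℝ | ∃ (f f' : ℝ → ℝ) (R : ℝ), 0 < R ∧ IsACProfile f f' ∧
    halfSemi f' univ ≠ ⊤ ∧
    (∀ t : ℝ, R ≤ t → f (-t) = α ∧ f t = β) ∧
    e = (7 / 16) * (halfSemi f' univ).toReal + ∫ x, V (f x)}

/-- The upper boundary-transition constant `c̄`. -/
def cUp (V : ℝ → ℝ) (α β : ℝ) : ℝ := sInf (cUpSet V α β)

/-- Hypotheses (H^W) on the interior double-well potential. -/
def HypW (W : ℝ → ℝ) (a b : ℝ) : Prop :=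
  Continuous W ∧ (∀ z, 0 ≤ W z) ∧ a < b ∧ (∀ z, W z = 0 ↔ z = a ∨ z = b) ∧
  ∃ C > (0:ℝ), ∀ z : ℝ, C * |z| ^ 2 - 1 / C ≤ W z

/-- Hypotheses (H^V) on the boundary double-well potential. -/
def HypV (V : ℝ → ℝ) (α β : ℝ) : Prop :=
  Continuous V ∧ (∀ z, 0 ≤ V z) ∧ α < β ∧ (∀ z, V z = 0 ↔ z = α ∨ z = β) ∧
  (∃ C > (0:ℝ), ∀ z : ℝ, C * |z| ^ 2 - 1 / C ≤ V z) ∧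
  ∃ C > (0:ℝ), ∃ ρ > (0:ℝ), ∀ z : ℝ,
    z ∈ Ioo (α - ρ) (α + ρ) ∪ Ioo (β - ρ) (β + ρ) →
      (1 / C) * min |z - α| |z - β| ^ 2 ≤ V z


/-- The one-dimensional interior energy `F_ε(u; I)` on the `H²` class
(written with lower integrals of the nonnegative integrands). -/
def F1D (W : ℝ → ℝ) (ε : ℝ) (u u'' : ℝ → ℝ) (I : Set ℝ) : ℝ≥0∞ :=
  ENNReal.ofReal (ε ^ 3) * ∫⁻ x in I, ENNReal.ofReal (u'' x ^ 2)
  + ENNReal.ofReal (1 / ε) * ∫⁻ x in I, ENNReal.ofReal (W (u x))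

/-- The one-dimensional boundary energy `G_ε(v; J)` on the `H^{3/2}` class. -/
def G1D (V : ℝ → ℝ) (ε lam : ℝ) (v v' : ℝ → ℝ) (J : Set ℝ) : ℝ≥0∞ :=
  ENNReal.ofReal (ε ^ 3 / 8) * halfSemi v' J
  + ENNReal.ofReal lam * ∫⁻ x in J, ENNReal.ofReal (V (v x))

/-- `u ∈ H²(I)`: `u` is differentiable on `I` with derivative `u'`, and `u'` is
absolutely continuous on `I` with a.e. derivative `u''`. -/
def IsH2On (I : Set ℝ) (u u' u'' : ℝ → ℝ) : Prop :=
  (∀ x ∈ I, HasDerivAt u (u' x) x) ∧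
  (∀ s ∈ I, ∀ t ∈ I, IntervalIntegrable u'' volume s t ∧
    u' t - u' s = ∫ x in s..t, u'' x)

/-- `v ∈ H^{3/2}(J)`: `v` is absolutely continuous on `J` with a.e. derivative `v'`,
and `v'` has finite `H^{1/2}(J)` seminorm. -/
def IsH32On (J : Set ℝ) (v v' : ℝ → ℝ) : Prop :=
  (∀ s ∈ J, ∀ t ∈ J, IntervalIntegrable v' volume s t ∧
    v t - v s = ∫ x in s..t, v' x) ∧
  halfSemi v' J ≠ ⊤

/-- `u ∈ BV(I; {c₀, c₁})`: `u` takes only the two values `c₀, c₁` on `I` and is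
locally constant on `I` off a finite set. -/
def BVtwo (I : Set ℝ) (c₀ c₁ : ℝ) (u : ℝ → ℝ) : Prop :=
  (∀ x ∈ I, u x = c₀ ∨ u x = c₁) ∧
  ∃ S : Finset ℝ, ∀ x ∈ I, x ∉ S → ∃ δ > 0, ∀ y ∈ I, |y - x| < δ → u y = u x

/-- Admissible class for the scaled characterization `c⋆⋆` of `c̄`. -/
def cStarStarSet (V : ℝ → ℝ) (α β : ℝ) : Set ℝ :=
  {e : ℝ | ∃ g g' : ℝ → ℝ, IsACProfile g g' ∧ halfSemi g' univ ≠ ⊤ ∧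
    (∀ t : ℝ, 1 ≤ t → g (-t) = α ∧ g t = β) ∧
    e = (3 * (7:ℝ) ^ ((1:ℝ) / 3) / 4)
          * (halfSemi g' univ).toReal ^ ((1:ℝ) / 3)
          * (∫ x : ℝ, V (g x)) ^ ((2:ℝ) / 3)}


/-! ### Auxiliary lemmas for the proof of `cUp_eq_cStarStar` -/

lemma rt3_cube {c : ℝ} (hc : 0 ≤ c) : ((c ^ 3 : ℝ)) ^ ((1:ℝ)/3) = c := by
  rw [← Real.rpow_natCast c 3, ← Real.rpow_mul hc]
  norm_num

lemma const_eq : ((21:ℝ)/16) ^ ((1:ℝ)/3) * ((3:ℝ)/2) ^ ((2:ℝ)/3)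
    = 3 * (7:ℝ) ^ ((1:ℝ)/3) / 4 := by
  have h1 : ((3:ℝ)/2) ^ ((2:ℝ)/3) = ((9:ℝ)/4) ^ ((1:ℝ)/3) := by
    rw [show (2:ℝ)/3 = 2 * (1/3) by norm_num,
      show ((3:ℝ)/2) ^ ((2:ℝ) * (1/3)) = (((3:ℝ)/2) ^ (2:ℝ)) ^ ((1:ℝ)/3) from
        Real.rpow_mul (by norm_num) 2 (1/3),
      Real.rpow_two]
    norm_num
  rw [h1, ← Real.mul_rpow (by norm_num) (by norm_num),
    show (21:ℝ)/16 * (9/4) = (3/4:ℝ)^3 * 7 by norm_num,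
    Real.mul_rpow (by positivity) (by norm_num), rt3_cube (by norm_num)]
  ring

lemma amgm {x y : ℝ} (hx : 0 ≤ x) (hy : 0 ≤ y) :
    3 * (7:ℝ) ^ ((1:ℝ)/3) / 4 * x ^ ((1:ℝ)/3) * y ^ ((2:ℝ)/3) ≤ 7/16 * x + y := by
  rcases eq_or_lt_of_le hx with hx0 | hx0
  · rw [← hx0, Real.zero_rpow (by norm_num)]
    nlinarith [Real.rpow_nonneg hy ((2:ℝ)/3)]
  rcases eq_or_lt_of_le hy with hy0 | hy0
  · rw [← hy0, Real.zero_rpow (by norm_num)]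
    nlinarith [Real.rpow_nonneg hx ((1:ℝ)/3)]
  have h := Real.geom_mean_le_arith_mean3_weighted (by norm_num : (0:ℝ) ≤ 1/3)
    (by norm_num : (0:ℝ) ≤ 1/3) (by norm_num : (0:ℝ) ≤ 1/3)
    (by linarith : (0:ℝ) ≤ 21/16 * x) (by linarith : (0:ℝ) ≤ 3/2 * y)
    (by linarith : (0:ℝ) ≤ 3/2 * y) (by norm_num : (1:ℝ)/3 + 1/3 + 1/3 = 1)
  have hL : (21/16 * x) ^ ((1:ℝ)/3) * (3/2 * y) ^ ((1:ℝ)/3) * (3/2 * y) ^ ((1:ℝ)/3)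
      = 3 * (7:ℝ) ^ ((1:ℝ)/3) / 4 * x ^ ((1:ℝ)/3) * y ^ ((2:ℝ)/3) := by
    rw [Real.mul_rpow (by norm_num) hx, Real.mul_rpow (by norm_num) hy]
    have h2 : ((3:ℝ)/2) ^ ((1:ℝ)/3) * y ^ ((1:ℝ)/3) * (((3:ℝ)/2) ^ ((1:ℝ)/3) * y ^ ((1:ℝ)/3))
        = ((3:ℝ)/2) ^ ((2:ℝ)/3) * y ^ ((2:ℝ)/3) := by
      rw [show ((3:ℝ)/2) ^ ((1:ℝ)/3) * y ^ ((1:ℝ)/3) * (((3:ℝ)/2) ^ ((1:ℝ)/3) * y ^ ((1:ℝ)/3))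
        = (((3:ℝ)/2) ^ ((1:ℝ)/3) * ((3:ℝ)/2) ^ ((1:ℝ)/3)) * (y ^ ((1:ℝ)/3) * y ^ ((1:ℝ)/3)) by
          ring,
        ← Real.rpow_add (by norm_num : (0:ℝ) < 3/2), ← Real.rpow_add hy0]
      norm_num
    calc ((21:ℝ)/16) ^ ((1:ℝ)/3) * x ^ ((1:ℝ)/3) * (((3:ℝ)/2) ^ ((1:ℝ)/3) * y ^ ((1:ℝ)/3))
          * (((3:ℝ)/2) ^ ((1:ℝ)/3) * y ^ ((1:ℝ)/3))
        = ((21:ℝ)/16) ^ ((1:ℝ)/3) * (((3:ℝ)/2) ^ ((2:ℝ)/3) * y ^ ((2:ℝ)/3)) * x ^ ((1:ℝ)/3) := by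
          rw [← h2]; ring
      _ = 3 * (7:ℝ) ^ ((1:ℝ)/3) / 4 * x ^ ((1:ℝ)/3) * y ^ ((2:ℝ)/3) := by
          rw [← mul_assoc, const_eq]; ring
  rw [hL] at h
  linarith

lemma opt_eq {x y lam : ℝ} (hx : 0 < x) (hy : 0 < y)
    (hlam : lam = (7 * x / (8 * y)) ^ ((1:ℝ)/3)) :
    7/16 * ((lam⁻¹) ^ 2 * x) + lam * y
      = 3 * (7:ℝ) ^ ((1:ℝ)/3) / 4 * x ^ ((1:ℝ)/3) * y ^ ((2:ℝ)/3) := by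
  set c : ℝ := (7:ℝ) ^ ((1:ℝ)/3) with hc
  set t : ℝ := x ^ ((1:ℝ)/3) with ht
  set s : ℝ := y ^ ((1:ℝ)/3) with hs
  have hcpos : 0 < c := Real.rpow_pos_of_pos (by norm_num) _
  have htpos : 0 < t := Real.rpow_pos_of_pos hx _
  have hspos : 0 < s := Real.rpow_pos_of_pos hy _
  have hc3 : c ^ 3 = 7 := by
    rw [hc, ← Real.rpow_natCast ((7:ℝ) ^ ((1:ℝ)/3)) 3, ← Real.rpow_mul (by norm_num)]
    norm_num
  have ht3 : t ^ 3 = x := by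
    rw [ht, ← Real.rpow_natCast (x ^ ((1:ℝ)/3)) 3, ← Real.rpow_mul hx.le]
    norm_num
  have hs3 : s ^ 3 = y := by
    rw [hs, ← Real.rpow_natCast (y ^ ((1:ℝ)/3)) 3, ← Real.rpow_mul hy.le]
    norm_num
  have hy23 : y ^ ((2:ℝ)/3) = s ^ 2 := by
    rw [show (2:ℝ)/3 = 1/3 * 2 by norm_num, Real.rpow_mul hy.le, ← hs, Real.rpow_two]
  have hlam' : lam = c * t / (2 * s) := by
    rw [hlam, Real.div_rpow (by positivity) (by positivity),
      Real.mul_rpow (by norm_num) hx.le, Real.mul_rpow (by norm_num) hy.le,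
      show (8:ℝ) = 2^3 by norm_num, rt3_cube (by norm_num)]
  rw [hlam', hy23, ← ht3, ← hs3]
  field_simp
  ring_nf
  nlinarith [hc3, mul_pos (pow_pos hspos 3) (pow_pos htpos 3)]

lemma lint_scale (a : ℝ) (ha : a ≠ 0) (f : ℝ → ℝ≥0∞) :
    ∫⁻ x, f (a * x) = ENNReal.ofReal |a⁻¹| * ∫⁻ x, f x := by
  have h1 : ∫⁻ x, f (a * x) = ∫⁻ x, f x ∂(Measure.map (fun x => a * x) volume) := by
    have := lintegral_map_equiv (μ := volume) f ((Homeomorph.mulLeft₀ a ha).toMeasurableEquiv)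
    simpa using this.symm
  rw [h1, Real.map_volume_mul_left ha, lintegral_smul_measure, smul_eq_mul]

lemma qmp_mul (a : ℝ) (ha : a ≠ 0) :
    Measure.QuasiMeasurePreserving (fun x : ℝ => a * x) volume volume :=
  ⟨measurable_const_mul a, by
    rw [Real.map_volume_mul_left ha]; exact Measure.smul_absolutelyContinuous⟩

lemma aemeas_of_ii {k : ℝ → ℝ} (h : ∀ s t : ℝ, IntervalIntegrable k volume s t) :
    AEMeasurable k (volume : Measure ℝ) := by
  have hu : (⋃ n : ℕ, Ioc (-(n:ℝ)) (n:ℝ)) = univ := by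
    apply eq_univ_iff_forall.2
    intro x
    obtain ⟨n, hn⟩ := exists_nat_gt |x|
    exact mem_iUnion.2 ⟨n, ⟨neg_lt.1 (by linarith [(abs_lt.1 hn).1]), (abs_lt.1 hn).2.le⟩⟩
  have := (aemeasurable_iUnion_iff (μ := (volume : Measure ℝ))
      (s := fun n : ℕ => Ioc (-(n:ℝ)) (n:ℝ)) (f := k)).2
    (fun n => ((h (-(n:ℝ)) n).1).aestronglyMeasurable.aemeasurable)
  rwa [hu, Measure.restrict_univ] at this

lemma aemeasF {u : ℝ → ℝ} (hu : AEMeasurable u (volume : Measure ℝ)) {d : ℝ × ℝ → ℝ}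
    (hd : Measurable d) :
    AEMeasurable (fun p : ℝ × ℝ => ENNReal.ofReal ((u p.1 - u p.2) ^ 2 / d p ^ 2))
      (volume : Measure (ℝ × ℝ)) := by
  rw [Measure.volume_eq_prod]
  have h1 : AEMeasurable (fun p : ℝ × ℝ => u p.1) ((volume : Measure ℝ).prod volume) :=
    hu.comp_quasiMeasurePreserving Measure.quasiMeasurePreserving_fst
  have h2 : AEMeasurable (fun p : ℝ × ℝ => u p.2) ((volume : Measure ℝ).prod volume) :=
    hu.comp_quasiMeasurePreserving Measure.quasiMeasurePreserving_snd
  exact ENNReal.measurable_ofReal.comp_aemeasurable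
    (((h1.sub h2).pow_const 2).div ((hd.pow_const 2).aemeasurable))

lemma halfSemi_scale {k : ℝ → ℝ} (hk : AEMeasurable k (volume : Measure ℝ)) (c a : ℝ)
    (ha : a ≠ 0) :
    halfSemi (fun x => c * k (a * x)) univ = ENNReal.ofReal (c ^ 2) * halfSemi k univ := by
  have hka : AEMeasurable (fun x => k (a * x)) (volume : Measure ℝ) :=
    hk.comp_quasiMeasurePreserving (qmp_mul a ha)
  set F : ℝ × ℝ → ℝ≥0∞ := fun p => ENNReal.ofReal ((k p.1 - k p.2) ^ 2 / (p.1 - p.2) ^ 2) with hF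
  have hFm : AEMeasurable F (volume : Measure (ℝ × ℝ)) :=
    aemeasF hk (measurable_fst.sub measurable_snd)
  have hGm : AEMeasurable (fun p : ℝ × ℝ => F (a * p.1, a * p.2)) (volume : Measure (ℝ × ℝ)) :=
    aemeasF hka ((measurable_const_mul a).comp measurable_fst |>.sub
      ((measurable_const_mul a).comp measurable_snd))
  have key : (fun p : ℝ × ℝ =>
        ENNReal.ofReal ((c * k (a * p.1) - c * k (a * p.2)) ^ 2 / (p.1 - p.2) ^ 2))
      = fun p => ENNReal.ofReal (c ^ 2 * a ^ 2) * F (a * p.1, a * p.2) := by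
    funext p
    rcases eq_or_ne p.1 p.2 with hp | hp
    · simp [hF, hp]
    · have h1 : p.1 - p.2 ≠ 0 := sub_ne_zero.mpr hp
      rw [hF, ← ENNReal.ofReal_mul (by positivity : (0:ℝ) ≤ c ^ 2 * a ^ 2)]
      congr 1
      have h2 : a * p.1 - a * p.2 ≠ 0 := by
        rw [← mul_sub]; exact mul_ne_zero ha h1
      field_simp
  have prod_eq : ∫⁻ p : ℝ × ℝ, F (a * p.1, a * p.2)
      = ENNReal.ofReal |a⁻¹| * (ENNReal.ofReal |a⁻¹| * ∫⁻ p : ℝ × ℝ, F p) := by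
    rw [Measure.volume_eq_prod, lintegral_prod _ hGm]
    have inner : ∀ x : ℝ, ∫⁻ y, F (a * x, a * y)
        = ENNReal.ofReal |a⁻¹| * ∫⁻ y, F (a * x, y) := fun x =>
      lint_scale a ha (fun y => F (a * x, y))
    simp_rw [inner]
    rw [lintegral_const_mul' _ _ ENNReal.ofReal_ne_top]
    rw [lint_scale a ha (fun x => ∫⁻ y, F (x, y)), ← lintegral_prod _ hFm]
  have hstep : halfSemi (fun x => c * k (a * x)) univ
      = ∫⁻ p : ℝ × ℝ, ENNReal.ofReal (c ^ 2 * a ^ 2) * F (a * p.1, a * p.2) := by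
    rw [halfSemi, univ_prod_univ, Measure.restrict_univ, key]
  rw [hstep, lintegral_const_mul' _ _ ENNReal.ofReal_ne_top, prod_eq, halfSemi, univ_prod_univ,
    Measure.restrict_univ, ← mul_assoc, ← mul_assoc, ← ENNReal.ofReal_mul (by positivity),
    ← ENNReal.ofReal_mul (by positivity)]
  congr 2
  have haa : |a⁻¹| * |a⁻¹| = (a ^ 2)⁻¹ := by
    rw [← abs_mul, ← mul_inv, ← sq, abs_inv, abs_sq]
  rw [mul_assoc, haa]
  field_simp

lemma continuous_of_AC {g g' : ℝ → ℝ} (hAC : IsACProfile g g') : Continuous g := by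
  have h : g = fun t => g 0 + ∫ x in (0:ℝ)..t, g' x := by
    funext t
    have := hAC.2 0 t
    linarith
  rw [h]
  exact continuous_const.add (intervalIntegral.continuous_primitive hAC.1 0)

lemma halfSemi_ne_zero {α β : ℝ} (hαβ : α < β) {g g' : ℝ → ℝ} (hAC : IsACProfile g g')
    (hb : ∀ t : ℝ, 1 ≤ t → g (-t) = α ∧ g t = β) :
    halfSemi g' univ ≠ 0 := by
  intro h0
  have hg' := aemeas_of_ii hAC.1
  have hF : AEMeasurable
      (fun p : ℝ × ℝ => ENNReal.ofReal ((g' p.1 - g' p.2) ^ 2 / (p.1 - p.2) ^ 2))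
      (volume : Measure (ℝ × ℝ)) := aemeasF hg' (measurable_fst.sub measurable_snd)
  rw [halfSemi, univ_prod_univ, Measure.restrict_univ] at h0
  have hae := (lintegral_eq_zero_iff' hF).mp h0
  have hdiag : (volume : Measure (ℝ × ℝ)) {p : ℝ × ℝ | p.1 = p.2} = 0 := by
    rw [Measure.volume_eq_prod,
      Measure.prod_apply (measurableSet_eq_fun measurable_fst measurable_snd)]
    have hsl : ∀ x : ℝ, (volume : Measure ℝ) (Prod.mk x ⁻¹' {p : ℝ × ℝ | p.1 = p.2}) = 0 := by
      intro x
      have hpre : Prod.mk x ⁻¹' {p : ℝ × ℝ | p.1 = p.2} = {x} := by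
        ext y; simp [eq_comm]
      rw [hpre]
      exact measure_singleton x
    simp [hsl]
  have hne : ∀ᵐ p : ℝ × ℝ, p.1 ≠ p.2 := by
    rw [ae_iff]
    simpa using hdiag
  have hae2 : ∀ᵐ p : ℝ × ℝ ∂((volume : Measure ℝ).prod volume), g' p.1 = g' p.2 := by
    rw [← Measure.volume_eq_prod]
    filter_upwards [hae, hne] with p hp hnep
    have h1 : (p.1 - p.2) ^ 2 ≠ 0 := pow_ne_zero _ (sub_ne_zero.mpr hnep)
    have h2 : (g' p.1 - g' p.2) ^ 2 / (p.1 - p.2) ^ 2 ≤ 0 := by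
      by_contra h
      push_neg at h
      simp only [Pi.zero_apply, ENNReal.ofReal_eq_zero] at hp
      linarith
    have h3 : (0:ℝ) ≤ (g' p.1 - g' p.2) ^ 2 / (p.1 - p.2) ^ 2 := by positivity
    have h5 : (g' p.1 - g' p.2) ^ 2 / (p.1 - p.2) ^ 2 = 0 := le_antisymm h2 h3
    rcases div_eq_zero_iff.mp h5 with h6 | h6
    · have := pow_eq_zero_iff (n := 2) (by norm_num) |>.1 h6
      linarith [sub_eq_zero.1 this]
    · exact absurd h6 h1
  have hxy := Measure.ae_ae_of_ae_prod hae2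
  have hvol_ne : (volume : Measure ℝ) ≠ 0 := by
    intro h
    have := Real.volume_Ioo (a := 0) (b := 1)
    rw [h] at this
    simp at this
  haveI : (ae (volume : Measure ℝ)).NeBot := ae_neBot.mpr hvol_ne
  obtain ⟨x₀, hx₀⟩ := hxy.exists
  have hconst : ∀ r t : ℝ, g t - g r = g' x₀ * (t - r) := by
    intro r t
    rw [hAC.2 r t]
    have hcg : ∫ x in r..t, g' x = ∫ x in r..t, g' x₀ := by
      apply intervalIntegral.integral_congr_ae
      filter_upwards [hx₀] with x hx _
      exact hx.symm
    rw [hcg, intervalIntegral.integral_const, smul_eq_mul]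
    ring
  have h1 := hconst (-2) (-1)
  have h2 := hconst (-1) 1
  have e1 : g (-1) = α := (hb 1 le_rfl).1
  have e2 : g (-2) = α := by simpa using (hb 2 (by norm_num)).1
  have e3 : g 1 = β := (hb 1 le_rfl).2
  rw [e1, e2] at h1
  rw [e3, e1] at h2
  have hc0 : g' x₀ = 0 := by linarith
  rw [hc0] at h2
  linarith

lemma intV {V : ℝ → ℝ} {α β : ℝ} (hV : HypV V α β) {g g' : ℝ → ℝ}
    (hAC : IsACProfile g g') (hb : ∀ t : ℝ, 1 ≤ t → g (-t) = α ∧ g t = β) :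
    Integrable (fun x => V (g x)) volume ∧ 0 < ∫ x, V (g x) := by
  obtain ⟨hVc, hV0, hαβ, hVz, -, -⟩ := hV
  have hgc : Continuous g := continuous_of_AC hAC
  have hzero : ∀ x : ℝ, x ∉ Icc (-1:ℝ) 1 → V (g x) = 0 := by
    intro x hx
    rw [mem_Icc, not_and_or] at hx
    push_neg at hx
    rcases hx with hx | hx
    · have hgx : g x = α := by
        have := (hb (-x) (by linarith)).1
        simpa using this
      rw [hgx]
      exact (hVz α).2 (Or.inl rfl)
    · have hgx : g x = β := (hb x (by linarith)).2
      rw [hgx]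
      exact (hVz β).2 (Or.inr rfl)
  have hcs : HasCompactSupport (fun x => V (g x)) :=
    HasCompactSupport.intro isCompact_Icc hzero
  have hint : Integrable (fun x => V (g x)) volume :=
    (hVc.comp hgc).integrable_of_hasCompactSupport hcs
  refine ⟨hint, ?_⟩
  have e1 : g (-1) = α := (hb 1 le_rfl).1
  have e3 : g 1 = β := (hb 1 le_rfl).2
  have hmem : (α + β) / 2 ∈ Icc (g (-1)) (g 1) := by
    rw [e1, e3]
    constructor <;> [linarith; linarith]
  obtain ⟨x₀, -, hgx₀⟩ := intermediate_value_Icc (by norm_num : (-1:ℝ) ≤ 1)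
    hgc.continuousOn hmem
  have hVm : 0 < V ((α + β) / 2) := by
    rcases (hV0 ((α + β) / 2)).lt_or_eq with h | h
    · exact h
    · exfalso
      rcases (hVz ((α + β) / 2)).1 h.symm with h2 | h2 <;> linarith
  rw [integral_pos_iff_support_of_nonneg (fun x => hV0 (g x)) hint]
  have hU : IsOpen ((fun x => V (g x)) ⁻¹' Ioi 0) :=
    (hVc.comp hgc).isOpen_preimage _ isOpen_Ioi
  have hx₀U : x₀ ∈ (fun x => V (g x)) ⁻¹' Ioi 0 := by
    simp only [mem_preimage, mem_Ioi]
    rw [hgx₀]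
    exact hVm
  refine lt_of_lt_of_le (hU.measure_pos volume ⟨x₀, hx₀U⟩) (measure_mono ?_)
  intro x hx
  simp only [mem_preimage, mem_Ioi] at hx
  exact ne_of_gt hx

lemma ac_scale {g g' : ℝ → ℝ} (hAC : IsACProfile g g') (a : ℝ) (ha : a ≠ 0) :
    IsACProfile (fun x => g (a * x)) (fun x => a * g' (a * x)) := by
  constructor
  · intro s t
    have h1 := (hAC.1 (a * s) (a * t)).comp_mul_left (c := a)
    rw [mul_div_cancel_left₀ _ ha, mul_div_cancel_left₀ _ ha] at h1
    exact h1.const_mul a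
  · intro s t
    have h1 : ∫ x in s..t, a * g' (a * x) = a * ∫ x in s..t, g' (a * x) :=
      intervalIntegral.integral_const_mul a _
    rw [h1, intervalIntegral.integral_comp_mul_left _ ha, smul_eq_mul, ← mul_assoc,
      mul_inv_cancel₀ ha, one_mul, ← hAC.2 (a * s) (a * t)]

lemma mem_dir1 {V : ℝ → ℝ} {α β : ℝ} (hV : HypV V α β) {e : ℝ}
    (he : e ∈ cStarStarSet V α β) : e ∈ cUpSet V α β := by
  obtain ⟨g, g', hAC, hfin, hb, rfl⟩ := he
  have hαβ := hV.2.2.1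
  obtain ⟨hint, hBpos⟩ := intV hV hAC hb
  set A := (halfSemi g' univ).toReal with hA
  set B := ∫ x, V (g x) with hB
  have hApos : 0 < A := ENNReal.toReal_pos (halfSemi_ne_zero hαβ hAC hb) hfin
  set lam : ℝ := (7 * A / (8 * B)) ^ ((1:ℝ)/3) with hlam
  have hlampos : 0 < lam := Real.rpow_pos_of_pos (by positivity) _
  have hainv : (lam⁻¹ : ℝ) ≠ 0 := inv_ne_zero hlampos.ne'
  refine ⟨fun x => g (lam⁻¹ * x), fun x => lam⁻¹ * g' (lam⁻¹ * x), lam, hlampos,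
    ac_scale hAC _ hainv, ?_, ?_, ?_⟩
  · rw [halfSemi_scale (aemeas_of_ii hAC.1) _ _ hainv]
    exact ENNReal.mul_ne_top ENNReal.ofReal_ne_top hfin
  · intro t ht
    have h1 : (1:ℝ) ≤ lam⁻¹ * t := by
      rw [inv_mul_eq_div]
      exact (one_le_div hlampos).mpr ht
    constructor
    · show g (lam⁻¹ * -t) = α
      have hmt : lam⁻¹ * -t = -(lam⁻¹ * t) := by ring
      rw [hmt]
      exact (hb _ h1).1
    · exact (hb _ h1).2
  · rw [halfSemi_scale (aemeas_of_ii hAC.1) _ _ hainv, ENNReal.toReal_mul,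
      ENNReal.toReal_ofReal (sq_nonneg _), ← hA]
    have hI : ∫ x, V (g (lam⁻¹ * x)) = lam * B := by
      rw [Measure.integral_comp_mul_left (fun y => V (g y)) lam⁻¹, inv_inv,
        abs_of_pos hlampos, smul_eq_mul, hB]
    rw [hI]
    exact (opt_eq hApos hBpos hlam).symm

lemma mem_dir2 {V : ℝ → ℝ} {α β : ℝ} (hV : HypV V α β) {e : ℝ}
    (he : e ∈ cUpSet V α β) : ∃ e' ∈ cStarStarSet V α β, e' ≤ e := by
  obtain ⟨f, f', R, hR, hAC, hfin, hb, rfl⟩ := he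
  have hRne : R ≠ 0 := hR.ne'
  have hsemi := halfSemi_scale (aemeas_of_ii hAC.1) R R hRne
  have hbdry : ∀ t : ℝ, 1 ≤ t → (fun x => f (R * x)) (-t) = α ∧ (fun x => f (R * x)) t = β := by
    intro t ht
    have h1 : R ≤ R * t := le_mul_of_one_le_right hR.le ht
    constructor
    · show f (R * -t) = α
      have hmt : R * -t = -(R * t) := by ring
      rw [hmt]
      exact (hb _ h1).1
    · exact (hb _ h1).2
  refine ⟨_, ⟨fun x => f (R * x), fun x => R * f' (R * x), ac_scale hAC R hRne, ?_, hbdry,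
    rfl⟩, ?_⟩
  · rw [hsemi]
    exact ENNReal.mul_ne_top ENNReal.ofReal_ne_top hfin
  · set A := (halfSemi f' univ).toReal with hA
    set B := ∫ x, V (f x) with hB
    have hA0 : (0:ℝ) ≤ A := ENNReal.toReal_nonneg
    have hB0 : (0:ℝ) ≤ B := integral_nonneg fun x => hV.2.1 (f x)
    have hI : ∫ x, V (f (R * x)) = R⁻¹ * B := by
      rw [Measure.integral_comp_mul_left (fun y => V (f y)) R, smul_eq_mul, hB,
        abs_of_pos (inv_pos.mpr hR)]
    rw [hsemi, ENNReal.toReal_mul, ENNReal.toReal_ofReal (sq_nonneg _), ← hA, hI]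
    have hcol : (R^2*A) ^ ((1:ℝ)/3) * (R⁻¹*B) ^ ((2:ℝ)/3) = A ^ ((1:ℝ)/3) * B ^ ((2:ℝ)/3) := by
      rw [Real.mul_rpow (sq_nonneg R) hA0, Real.mul_rpow (inv_nonneg.mpr hR.le) hB0]
      have e1 : ((R^2 : ℝ)) ^ ((1:ℝ)/3) = R ^ ((2:ℝ)/3) := by
        rw [← Real.rpow_natCast R 2, ← Real.rpow_mul hR.le]; norm_num
      have e2 : ((R⁻¹ : ℝ)) ^ ((2:ℝ)/3) = R ^ (-((2:ℝ)/3)) := by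
        rw [← Real.rpow_neg_one R, ← Real.rpow_mul hR.le]; norm_num
      rw [e1, e2]
      have e3 : R ^ ((2:ℝ)/3) * R ^ (-((2:ℝ)/3)) = 1 := by
        rw [← Real.rpow_add hR]; norm_num
      calc R ^ ((2:ℝ)/3) * A ^ ((1:ℝ)/3) * (R ^ (-((2:ℝ)/3)) * B ^ ((2:ℝ)/3))
          = (R ^ ((2:ℝ)/3) * R ^ (-((2:ℝ)/3))) * (A ^ ((1:ℝ)/3) * B ^ ((2:ℝ)/3)) := by ring
        _ = A ^ ((1:ℝ)/3) * B ^ ((2:ℝ)/3) := by rw [e3]; ring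
    calc 3 * (7:ℝ) ^ ((1:ℝ)/3) / 4 * (R^2*A) ^ ((1:ℝ)/3) * (R⁻¹*B) ^ ((2:ℝ)/3)
        = 3 * (7:ℝ) ^ ((1:ℝ)/3) / 4 * (A ^ ((1:ℝ)/3) * B ^ ((2:ℝ)/3)) := by
          rw [mul_assoc, hcol]
      _ = 3 * (7:ℝ) ^ ((1:ℝ)/3) / 4 * A ^ ((1:ℝ)/3) * B ^ ((2:ℝ)/3) := by ring
      _ ≤ 7/16 * A + B := amgm hA0 hB0

lemma cUpSet_nonneg {V : ℝ → ℝ} {α β : ℝ} (hV : HypV V α β) {e : ℝ}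
    (he : e ∈ cUpSet V α β) : 0 ≤ e := by
  obtain ⟨f, f', R, -, -, -, -, rfl⟩ := he
  have h1 : (0:ℝ) ≤ ∫ x, V (f x) := integral_nonneg fun x => hV.2.1 (f x)
  have h2 : (0:ℝ) ≤ (halfSemi f' univ).toReal := ENNReal.toReal_nonneg
  linarith

lemma cStarStarSet_nonneg {V : ℝ → ℝ} {α β : ℝ} (hV : HypV V α β) {e : ℝ}
    (he : e ∈ cStarStarSet V α β) : 0 ≤ e := by
  obtain ⟨g, g', -, -, -, rfl⟩ := he
  have h1 : (0:ℝ) ≤ (halfSemi g' univ).toReal ^ ((1:ℝ)/3) :=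
    Real.rpow_nonneg ENNReal.toReal_nonneg _
  have h2 : (0:ℝ) ≤ (∫ x, V (g x)) ^ ((2:ℝ)/3) :=
    Real.rpow_nonneg (integral_nonneg fun x => hV.2.1 (g x)) _
  positivity

/-- **characterization of `c̄`.** Under `(H^V)`,
`c̄ = c⋆⋆ := inf{ (3·7^{1/3}/4)·(|g'|²_{H^{1/2}(ℝ)})^{1/3}·(∫_ℝ V(g))^{2/3} }` over
`g ∈ H^{3/2}_loc(ℝ)` with `g(-t) = α`, `g(t) = β` for `t ≥ 1`. -/
theorem cUp_eq_cStarStar (V : ℝ → ℝ) (α β : ℝ) (hV : HypV V α β) :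
    cUp V α β = sInf (cStarStarSet V α β) := by
  rcases Set.eq_empty_or_nonempty (cStarStarSet V α β) with hemp | hne
  · have hup : cUpSet V α β = ∅ := by
      rw [Set.eq_empty_iff_forall_notMem]
      intro e he
      obtain ⟨e', he', -⟩ := mem_dir2 hV he
      rw [hemp] at he'
      exact he'
    rw [cUp, hup, hemp]
  · rw [cUp]
    refine le_antisymm ?_ ?_
    · refine le_csInf hne fun e he => ?_
      exact csInf_le ⟨0, fun x hx => cUpSet_nonneg hV hx⟩ (mem_dir1 hV he)
    · obtain ⟨e₀, he₀⟩ := hne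
      refine le_csInf ⟨e₀, mem_dir1 hV he₀⟩ fun e he => ?_
      obtain ⟨e', he', hle⟩ := mem_dir2 hV he
      exact le_trans (csInf_le ⟨0, fun x hx => cStarStarSet_nonneg hV hx⟩ he') hle


end
end

section
/- Let J ⊂ ℝ be an open bounded interval, let θ ∈ L¹(J; [0,1]), and suppose the set X := { x ∈ J : there exists δ₀ = δ₀(x) > 0 such that the average of θ over J ∩ B(x,δ) lies in the open interval (0,1) for all 0 < δ < δ₀ } is finite. Then θ coincides a.e. with a function of bounded variation on J taking values in {0,1}, whose jump set is contained in X. -/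
open MeasureTheory Set Filter Topology ENNReal

noncomputable section

/-- **Lemma 4.4.**
Let `J = (A,B)` be a bounded open interval and `θ ∈ L¹(J;[0,1])`.  If the set `X` of
points `x ∈ J` at which the averages of `θ` over `J ∩ B(x,δ)` lie in `(0,1)` for all
small `δ > 0` is finite, then `θ` coincides a.e. on `J` with a `BV` function with
values in `{0,1}` which is locally constant on `J` off `X` (so its jump set is
contained in `X`). -/
theorem theta_of_finite_transition_set (A B : ℝ) (hAB : A < B) (θ : ℝ → ℝ)
    (hint : IntegrableOn θ (Ioo A B))
    (hrange : ∀ x ∈ Ioo A B, θ x ∈ Icc (0:ℝ) 1)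
    (X : Set ℝ)
    (hX : X = {x ∈ Ioo A B | ∃ δ₀ > (0:ℝ), ∀ δ ∈ Ioo (0:ℝ) δ₀,
      (∫ s in Ioo A B ∩ Metric.ball x δ, θ s)
          / (volume (Ioo A B ∩ Metric.ball x δ)).toReal ∈ Ioo (0:ℝ) 1})
    (hXfin : X.Finite) :
    ∃ v : ℝ → ℝ,
      (∀ᵐ x ∂(volume.restrict (Ioo A B)), θ x = v x) ∧
      (∀ x ∈ Ioo A B, v x = 0 ∨ v x = 1) ∧
      (∀ x ∈ Ioo A B, x ∉ X → ∃ δ > 0, ∀ y ∈ Ioo A B, |y - x| < δ → v y = v x) := by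
  have key : ∀ x ∈ Ioo A B \ X, ∃ δ, 0 < δ ∧ ∃ c : ℝ, (c = 0 ∨ c = 1) ∧
      ∀ᵐ y ∂(volume.restrict (Ioo A B ∩ Metric.ball x δ)), θ y = c := by
    rintro x ⟨hxJ, hxX'⟩
    have hxX : ¬ ∃ δ₀ > (0:ℝ), ∀ δ ∈ Ioo (0:ℝ) δ₀,
        (∫ s in Ioo A B ∩ Metric.ball x δ, θ s)
            / (volume (Ioo A B ∩ Metric.ball x δ)).toReal ∈ Ioo (0:ℝ) 1 := by
      intro h
      exact hxX' (hX ▸ ⟨hxJ, h⟩)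
    push_neg at hxX
    obtain ⟨δ, hδ, havg⟩ := hxX 1 one_pos
    set S := Ioo A B ∩ Metric.ball x δ with hS
    have hSmeas : MeasurableSet S := measurableSet_Ioo.inter measurableSet_ball
    have hSopen : IsOpen S := isOpen_Ioo.inter Metric.isOpen_ball
    have hSne : S.Nonempty := ⟨x, hxJ, Metric.mem_ball_self hδ.1⟩
    have hpos : 0 < volume S := hSopen.measure_pos volume hSne
    have hfin : volume S < ⊤ :=
      lt_of_le_of_lt (measure_mono inter_subset_left) measure_Ioo_lt_top
    have hmt : 0 < (volume S).toReal := ENNReal.toReal_pos hpos.ne' hfin.ne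
    have hintS : IntegrableOn θ S := hint.mono_set inter_subset_left
    have I0 : 0 ≤ ∫ s in S, θ s :=
      setIntegral_nonneg hSmeas (fun y hy => (hrange y hy.1).1)
    have I1 : ∫ s in S, θ s ≤ (volume S).toReal := by
      calc ∫ s in S, θ s ≤ ∫ _ in S, (1:ℝ) :=
            setIntegral_mono_on hintS (integrableOn_const hfin.ne) hSmeas
              (fun y hy => (hrange y hy.1).2)
        _ = (volume S).toReal := by simp [Measure.real]
    have hge : 0 ≤ (∫ s in S, θ s) / (volume S).toReal := div_nonneg I0 hmt.le
    have hle : (∫ s in S, θ s) / (volume S).toReal ≤ 1 := (div_le_one hmt).2 I1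
    have havg' : (∫ s in S, θ s) / (volume S).toReal = 0 ∨
        (∫ s in S, θ s) / (volume S).toReal = 1 := by
      rcases eq_or_lt_of_le hge with h | h
      · exact Or.inl h.symm
      rcases eq_or_lt_of_le hle with h2 | h2
      · exact Or.inr h2
      · exact absurd ⟨h, h2⟩ havg
    rcases havg' with h | h
    · -- integral = 0, θ = 0 a.e.
      have hI : ∫ s in S, θ s = 0 := by
        rcases div_eq_zero_iff.mp h with h1 | h1
        · exact h1
        · exact absurd h1 hmt.ne'
      refine ⟨δ, hδ.1, 0, Or.inl rfl, ?_⟩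
      have hnn : 0 ≤ᵐ[volume.restrict S] θ :=
        (ae_restrict_iff' hSmeas).2 (ae_of_all _ fun y hy => (hrange y hy.1).1)
      exact (integral_eq_zero_iff_of_nonneg_ae hnn hintS).1 hI
    · -- integral = measure, θ = 1 a.e.
      have hI : ∫ s in S, θ s = (volume S).toReal := by
        field_simp at h
        linarith
      refine ⟨δ, hδ.1, 1, Or.inr rfl, ?_⟩
      have hint1 : IntegrableOn (fun y => 1 - θ y) S :=
        (integrableOn_const hfin.ne).sub hintS
      have hnn : 0 ≤ᵐ[volume.restrict S] (fun y => 1 - θ y) :=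
        (ae_restrict_iff' hSmeas).2 (ae_of_all _ fun y hy => by
          have := (hrange y hy.1).2; simp; linarith)
      have hI0 : ∫ s in S, (1 - θ s) = 0 := by
        rw [integral_sub ((integrableOn_const (C := (1:ℝ)) hfin.ne)) hintS]
        simp [hI, Measure.real]
      have := (integral_eq_zero_iff_of_nonneg_ae hnn hint1).1 hI0
      filter_upwards [this] with y hy
      have : 1 - θ y = 0 := hy
      linarith
  choose! δf hδf cf hcf hae using key
  -- consistency
  have hcons : ∀ x ∈ Ioo A B \ X, ∀ y ∈ Ioo A B \ X,
      y ∈ Metric.ball x (δf x) → cf y = cf x := by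
    intro x hx y hy hyb
    set S := Ioo A B ∩ Metric.ball x (δf x) ∩ Metric.ball y (δf y) with hS
    have hSopen : IsOpen S :=
      ((isOpen_Ioo.inter Metric.isOpen_ball).inter Metric.isOpen_ball)
    have hSne : S.Nonempty := ⟨y, ⟨hy.1, hyb⟩, Metric.mem_ball_self (hδf y hy)⟩
    have hpos : volume S ≠ 0 := (hSopen.measure_pos volume hSne).ne'
    have h1 : ∀ᵐ z ∂(volume.restrict S), θ z = cf x :=
      ae_mono (Measure.restrict_mono inter_subset_left le_rfl) (hae x hx)
    have hsub : S ⊆ Ioo A B ∩ Metric.ball y (δf y) := fun z hz => ⟨hz.1.1, hz.2⟩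
    have h2 : ∀ᵐ z ∂(volume.restrict S), θ z = cf y :=
      ae_mono (Measure.restrict_mono hsub le_rfl) (hae y hy)
    have hne : (ae (volume.restrict S)).NeBot := by
      rw [ae_neBot, Ne, Measure.restrict_eq_zero]; exact hpos
    obtain ⟨z, hz1, hz2⟩ := (h1.and h2).exists
    rw [← hz2, ← hz1]
  classical
  set v : ℝ → ℝ := fun y => if y ∈ Ioo A B \ X then cf y else 0 with hv
  -- countable subcover
  obtain ⟨T, hTc, hTeq⟩ := TopologicalSpace.isOpen_iUnion_countable
    (fun i : ↥(Ioo A B \ X) => Metric.ball (i : ℝ) (δf i))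
    (fun i => Metric.isOpen_ball)
  refine ⟨v, ?_, ?_, ?_⟩
  · -- a.e. equality
    have hnull : ∀ i : ↥(Ioo A B \ X),
        volume ({y | θ y ≠ cf (i : ℝ)} ∩ (Ioo A B ∩ Metric.ball (i : ℝ) (δf i))) = 0 := by
      intro i
      have := hae (i : ℝ) i.2
      rw [ae_iff] at this
      rw [Measure.restrict_apply' (measurableSet_Ioo.inter measurableSet_ball)] at this
      exact this
    have hXnull : volume X = 0 := hXfin.measure_zero volume
    have hbig : volume (X ∪ ⋃ i ∈ T,
        ({y | θ y ≠ cf (i : ℝ)} ∩ (Ioo A B ∩ Metric.ball (i : ℝ) (δf i)))) = 0 := by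
      refine measure_union_null hXnull ?_
      exact (measure_biUnion_null_iff hTc).2 fun i _ => hnull i
    rw [ae_restrict_iff' measurableSet_Ioo]
    rw [ae_iff]
    refine measure_mono_null ?_ hbig
    intro y hy
    simp only [mem_setOf_eq, not_forall] at hy
    obtain ⟨hyJ, hyne⟩ := hy
    by_cases hyX : y ∈ X
    · exact Or.inl hyX
    · have hyJX : y ∈ Ioo A B \ X := ⟨hyJ, hyX⟩
      have : y ∈ ⋃ i ∈ T, Metric.ball (i : ℝ) (δf i) := by
        rw [hTeq]
        exact mem_iUnion.2 ⟨⟨y, hyJX⟩, Metric.mem_ball_self (hδf y hyJX)⟩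
      obtain ⟨i, hiT, hib⟩ := by
        simpa only [mem_iUnion, exists_prop] using this
      refine Or.inr (mem_biUnion hiT ⟨?_, hyJ, hib⟩)
      have hvy : v y = cf (i : ℝ) := by
        rw [hv]; simp only [hyJX, if_pos]
        exact hcons (i : ℝ) i.2 y hyJX hib
      rw [hvy] at hyne
      exact hyne
  · -- range
    intro x hxJ
    by_cases hxX : x ∈ X
    · left; rw [hv]; simp [hxX]
    · have h := hcf x ⟨hxJ, hxX⟩
      rw [hv]; simp only [mem_diff, hxJ, hxX, not_false_iff, and_self, if_pos]
      exact h
  · -- local constancy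
    intro x hxJ hxX
    have hXc : IsClosed X := hXfin.isClosed
    obtain ⟨ε, hε, hball⟩ := Metric.isOpen_iff.mp hXc.isOpen_compl x hxX
    refine ⟨min (δf x) ε, lt_min (hδf x ⟨hxJ, hxX⟩) hε, ?_⟩
    intro y hyJ hyd
    have hyb : y ∈ Metric.ball x (δf x) := by
      rw [Metric.mem_ball, Real.dist_eq]
      exact lt_of_lt_of_le hyd (min_le_left _ _)
    have hyX : y ∉ X := hball (by
      rw [Metric.mem_ball, Real.dist_eq]
      exact lt_of_lt_of_le hyd (min_le_right _ _))
    have h1 : v y = cf y := by rw [hv]; simp [mem_diff, hyJ, hyX]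
    have h2 : v x = cf x := by rw [hv]; simp [mem_diff, hxJ, hxX]
    rw [h1, h2]
    exact hcons x ⟨hxJ, hxX⟩ y ⟨hyJ, hyX⟩ hyb

end
end

section
/- Let μ, μ¹ and μ² be nonnegative finite Radon measures on ℝ^N, with μ¹ and μ² mutually singular, and suppose μ(B) ≥ μ¹(B) and μ(B) ≥ μ²(B) for every open ball B with μ(∂B) = 0. Then μ(E) ≥ μ¹(E) + μ²(E) for every Borel set E ⊂ ℝ^N. -/
open MeasureTheory Set Filter Topology

/-- Key auxiliary lemma: if `ν B ≤ μ B` for every open ball with `μ`-null frontier,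
then `ν (closedBall x r) ≤ μ (closedBall x r)` for every closed ball. -/
lemma aux_closedBall_le {N : ℕ}
    (μ ν : Measure (EuclideanSpace ℝ (Fin N)))
    [IsFiniteMeasure μ] [IsFiniteMeasure ν]
    (h : ∀ (x : EuclideanSpace ℝ (Fin N)) (r : ℝ), 0 < r →
      μ (frontier (Metric.ball x r)) = 0 → ν (Metric.ball x r) ≤ μ (Metric.ball x r))
    (x : EuclideanSpace ℝ (Fin N)) (r : ℝ) (hr : 0 < r) :
    ν (Metric.closedBall x r) ≤ μ (Metric.closedBall x r) := by
  apply ENNReal.le_of_forall_pos_le_add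
  intro ε εpos _
  -- the closed balls of radius `r + 1/(n+1)` decrease to the closed ball of radius `r`
  have hiInter : ⋂ n : ℕ, Metric.closedBall x (r + 1 / (n + 1)) = Metric.closedBall x r := by
    ext y
    simp only [mem_iInter, Metric.mem_closedBall]
    constructor
    · intro hy
      have : Filter.Tendsto (fun n : ℕ => r + 1 / (n + 1 : ℝ)) atTop (nhds r) := by
        have : Filter.Tendsto (fun n : ℕ => 1 / (n + 1 : ℝ)) atTop (nhds 0) :=
          tendsto_one_div_add_atTop_nhds_zero_nat
        simpa using tendsto_const_nhds.add this
      exact ge_of_tendsto this (Filter.Eventually.of_forall hy)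
    · intro hy n
      have : (0 : ℝ) < 1 / (n + 1 : ℝ) := by positivity
      linarith
  have htend : Filter.Tendsto (fun n : ℕ => μ (Metric.closedBall x (r + 1 / (n + 1))))
      atTop (nhds (μ (Metric.closedBall x r))) := by
    have := MeasureTheory.tendsto_measure_iInter_atTop (μ := μ)
      (s := fun n : ℕ => Metric.closedBall x (r + 1 / (n + 1)))
      (fun n => Metric.isClosed_closedBall.measurableSet.nullMeasurableSet)
      (fun m n hmn => Metric.closedBall_subset_closedBall (by
        have : 1 / (n + 1 : ℝ) ≤ 1 / (m + 1 : ℝ) := by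
          apply one_div_le_one_div_of_le (by positivity)
          exact_mod_cast by omega
        linarith))
      ⟨0, measure_ne_top μ _⟩
    rw [hiInter] at this
    exact this
  have : ∀ᶠ n : ℕ in atTop,
      μ (Metric.closedBall x (r + 1 / (n + 1))) < μ (Metric.closedBall x r) + ε := by
    apply htend.eventually_lt_const
    exact ENNReal.lt_add_right (measure_ne_top μ _) (by simpa using εpos.ne')
  obtain ⟨n, hn⟩ := this.exists
  -- pick a good radius `s ∈ (r, r + 1/(n+1))` with null frontier
  have hlt : r < r + 1 / (n + 1 : ℝ) := by
    have : (0 : ℝ) < 1 / (n + 1 : ℝ) := by positivity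
    linarith
  obtain ⟨s, hs_mem, hs_null⟩ :=
    MeasureTheory.exists_null_frontier_thickening μ {x} hlt
  rw [Metric.thickening_singleton] at hs_null
  have hspos : 0 < s := hr.trans hs_mem.1
  calc ν (Metric.closedBall x r)
      ≤ ν (Metric.ball x s) := measure_mono fun y hy =>
        lt_of_le_of_lt (Metric.mem_closedBall.1 hy) hs_mem.1
    _ ≤ μ (Metric.ball x s) := h x s hspos hs_null
    _ ≤ μ (Metric.closedBall x (r + 1 / (n + 1))) := measure_mono
        (Metric.ball_subset_closedBall.trans
          (Metric.closedBall_subset_closedBall hs_mem.2.le))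
    _ ≤ μ (Metric.closedBall x r) + ε := hn.le

/-- From the closed-ball comparison, `ν s ≤ μ s` for every set, via the Besicovitch
Vitali family and a covering argument. -/
lemma aux_le {N : ℕ}
    (μ ν : Measure (EuclideanSpace ℝ (Fin N)))
    [IsFiniteMeasure μ] [IsFiniteMeasure ν]
    (h : ∀ (x : EuclideanSpace ℝ (Fin N)) (r : ℝ), 0 < r →
      μ (frontier (Metric.ball x r)) = 0 → ν (Metric.ball x r) ≤ μ (Metric.ball x r))
    (s : Set (EuclideanSpace ℝ (Fin N))) : ν s ≤ μ s := by
  have key : ∀ x ∈ s, ∃ᶠ a in (Besicovitch.vitaliFamily ν).filterAt x, ν a ≤ μ a := by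
    intro x _
    apply (Besicovitch.tendsto_filterAt ν x).frequently
    apply Filter.Eventually.frequently
    filter_upwards [self_mem_nhdsWithin] with r (hr : r ∈ Set.Ioi (0:ℝ))
    exact aux_closedBall_le μ ν h x r hr
  exact (Besicovitch.vitaliFamily ν).measure_le_of_frequently_le μ
    Measure.AbsolutelyContinuous.rfl s key

/-- **Lemma 5.6.**
Let `μ, μ¹, μ²` be nonnegative finite (Radon) measures on `ℝ^N`, with `μ¹` and `μ²`
mutually singular, and suppose that `μ(B) ≥ μ¹(B)` and `μ(B) ≥ μ²(B)` for every open
ball `B` with `μ(∂B) = 0`.  Then `μ(E) ≥ μ¹(E) + μ²(E)` for every Borel set `E`. -/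
theorem measure_additive_lower_bound {N : ℕ}
    (μ μ1 μ2 : Measure (EuclideanSpace ℝ (Fin N)))
    [IsFiniteMeasure μ] [IsFiniteMeasure μ1] [IsFiniteMeasure μ2]
    (hsing : μ1 ⟂ₘ μ2)
    (h1 : ∀ (x : EuclideanSpace ℝ (Fin N)) (r : ℝ), 0 < r →
      μ (frontier (Metric.ball x r)) = 0 → μ1 (Metric.ball x r) ≤ μ (Metric.ball x r))
    (h2 : ∀ (x : EuclideanSpace ℝ (Fin N)) (r : ℝ), 0 < r →
      μ (frontier (Metric.ball x r)) = 0 → μ2 (Metric.ball x r) ≤ μ (Metric.ball x r)) :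
    ∀ E : Set (EuclideanSpace ℝ (Fin N)), MeasurableSet E → μ1 E + μ2 E ≤ μ E := by
  intro E hE
  obtain ⟨S, hSm, hS1, hS2⟩ := hsing
  have e1 : μ1 E = μ1 (E \ S) := by
    have h0 : μ1 (E ∩ S) = 0 := measure_mono_null Set.inter_subset_right hS1
    rw [← measure_inter_add_diff E hSm, h0, zero_add]
  have e2 : μ2 E = μ2 (E ∩ S) := by
    have h0 : μ2 (E \ S) = 0 :=
      measure_mono_null (Set.diff_subset_iff.2 (by simp [Set.union_comm])) hS2
    rw [← measure_inter_add_diff E hSm, h0, add_zero]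
  calc μ1 E + μ2 E = μ1 (E \ S) + μ2 (E ∩ S) := by rw [e1, e2]
    _ ≤ μ (E \ S) + μ (E ∩ S) := add_le_add (aux_le μ μ1 h1 _) (aux_le μ μ2 h2 _)
    _ = μ E := by rw [add_comm, measure_inter_add_diff E hSm]
end
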